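/- arXiv:2601.19030 — 2 statements merged into one kernel-verified Lean document; each statement's English description precedes it below -/
import Mathlib

section
/- Fix a positive integer d and γ ∈ [0,1). Let Σ and Σcr be d×d real matrices with Σ symmetric positive definite, let φ₀ ∈ ℝ^d, set A := Σ − γ·Σcr and Bπ := (Σ⁻¹·Σcr)ᵀ. Assume that every complex eigenvalue μ of Bπ (viewed as a complex matrix) satisfies γ·|μ| < 1. Then A is invertible, the series ν := (1−γ)·Σ_{t≥0} γᵗ·(Bπ)ᵗ·φ₀ converges in ℝ^d, and the feature-dynamics coverage satisfies (1−γ)²·φ₀ᵀ·A⁻¹·Σ·A⁻ᵀ·φ₀ = νᵀ·Σ⁻¹·ν. -/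
open Matrix MeasureTheory ProbabilityTheory
open Filter
open scoped Classical Topology

noncomputable section

/-- Euclidean norm of a vector in `ℝ^d`. -/
def norm2 {d : ℕ} (v : Fin d → ℝ) : ℝ := Real.sqrt (v ⬝ᵥ v)

/-- The positive semidefinite square root of a matrix (junk value `0` if not PSD). -/
def psdSqrt {d : ℕ} (M : Matrix (Fin d) (Fin d) ℝ) : Matrix (Fin d) (Fin d) ℝ :=
  if h : M.PosSemidef then
    h.1.eigenvectorUnitary.1 * diagonal ((↑) ∘ (√·) ∘ h.1.eigenvalues) *
      (star h.1.eigenvectorUnitary : Matrix (Fin d) (Fin d) ℝ) else 0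

/-- Largest eigenvalue of a symmetric matrix (junk value `0` if not symmetric). -/
def lamMax {d : ℕ} (M : Matrix (Fin d) (Fin d) ℝ) : ℝ :=
  if h : M.IsHermitian then ⨆ i, h.eigenvalues i else 0

/-- Smallest eigenvalue of a symmetric matrix (junk value `0` if not symmetric). -/
def lamMin {d : ℕ} (M : Matrix (Fin d) (Fin d) ℝ) : ℝ :=
  if h : M.IsHermitian then ⨅ i, h.eigenvalues i else 0

/-- Smallest singular value. -/
def sigmaMin {d : ℕ} (M : Matrix (Fin d) (Fin d) ℝ) : ℝ := Real.sqrt (lamMin (Mᵀ * M))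

/-- Largest singular value (operator norm). -/
def sigmaMax {d : ℕ} (M : Matrix (Fin d) (Fin d) ℝ) : ℝ := Real.sqrt (lamMax (Mᵀ * M))

/-- Empirical covariance matrix `(1/n) ∑ᵢ WᵢWᵢᵀ`. -/
def empSigma {d n : ℕ} (W : Fin n → Fin d → ℝ) : Matrix (Fin d) (Fin d) ℝ :=
  (n : ℝ)⁻¹ • ∑ i, vecMulVec (W i) (W i)

/-- Empirical LSTDQ matrix `(1/n) ∑ᵢ Wᵢ(Wᵢ - γWᵢ')ᵀ`. -/
def empA {d n : ℕ} (γ : ℝ) (W W' : Fin n → Fin d → ℝ) : Matrix (Fin d) (Fin d) ℝ :=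
  (n : ℝ)⁻¹ • ∑ i, vecMulVec (W i) (W i - γ • W' i)

/-- Empirical LSTDQ vector `(1/n) ∑ᵢ RᵢWᵢ`. -/
def empb {d n : ℕ} (W : Fin n → Fin d → ℝ) (R : Fin n → ℝ) : Fin d → ℝ :=
  (n : ℝ)⁻¹ • ∑ i, R i • W i

section auxC
attribute [local instance] Matrix.linftyOpNormedRing Matrix.linftyOpNormedAlgebra

lemma aux_entry_bound {d : ℕ} (M : Matrix (Fin d) (Fin d) ℂ)
    (hs : ∀ z ∈ spectrum ℂ M, ‖z‖ < 1) :
    ∃ r : ℝ, 0 ≤ r ∧ r < 1 ∧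
      ∀ᶠ n in atTop, ∀ i j, ‖(M ^ n) i j‖ ≤ r ^ n := by
  have hfin : (spectrum ℂ M).Finite := M.finite_spectrum
  set r0 : NNReal := hfin.toFinset.sup (fun z => ‖z‖₊) with hr0def
  have hρ : spectralRadius ℂ M ≤ (r0 : ENNReal) := by
    rw [spectralRadius]
    exact iSup₂_le fun z hz => ENNReal.coe_le_coe.mpr
      (Finset.le_sup (hfin.mem_toFinset.mpr hz))
  have hr0 : r0 < 1 := by
    rw [hr0def]
    refine (Finset.sup_lt_iff (by norm_num : (⊥ : NNReal) < 1)).mpr fun z hz => ?_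
    have h := hs z (hfin.mem_toFinset.mp hz)
    rw [← NNReal.coe_lt_coe, coe_nnnorm]
    exact h
  set r' : NNReal := (r0 + 1) / 2 with hr'def
  have hr0r' : r0 < r' := by
    rw [← NNReal.coe_lt_coe]
    push_cast [hr'def]
    rw [← NNReal.coe_lt_coe] at hr0
    push_cast at hr0
    linarith
  have hr'1 : r' < 1 := by
    rw [← NNReal.coe_lt_coe]
    push_cast [hr'def]
    rw [← NNReal.coe_lt_coe] at hr0
    push_cast at hr0
    linarith
  have hgel := spectrum.pow_nnnorm_pow_one_div_tendsto_nhds_spectralRadius M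
  have hev : ∀ᶠ n : ℕ in atTop, (‖M ^ n‖₊ : ENNReal) ^ (1 / (n : ℝ)) < (r' : ENNReal) :=
    hgel.eventually_lt_const (lt_of_le_of_lt hρ (by exact_mod_cast hr0r'))
  refine ⟨r', r'.coe_nonneg, by exact_mod_cast hr'1, ?_⟩
  filter_upwards [hev, eventually_ge_atTop 1] with n hn hn1 i j
  have hnn : (n : ℝ) ≠ 0 := by positivity
  have h1 : (‖M ^ n‖₊ : ENNReal) ≤ (r' : ENNReal) ^ (n : ℕ) := by
    have h2 := ENNReal.rpow_le_rpow hn.le (Nat.cast_nonneg n : (0:ℝ) ≤ n)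
    rwa [← ENNReal.rpow_mul, one_div_mul_cancel hnn, ENNReal.rpow_one,
      ENNReal.rpow_natCast] at h2
  have h3 : ‖M ^ n‖₊ ≤ r' ^ n := by exact_mod_cast h1
  have h4 : ‖(M ^ n) i j‖₊ ≤ ‖M ^ n‖₊ := by
    rw [Matrix.linfty_opNNNorm_def]
    exact le_trans
      (Finset.single_le_sum (f := fun j => ‖(M ^ n) i j‖₊) (fun _ _ => zero_le)
        (Finset.mem_univ j))
      (Finset.le_sup (f := fun i => ∑ j, ‖(M ^ n) i j‖₊) (Finset.mem_univ i))
  have h5 : ‖(M ^ n) i j‖₊ ≤ r' ^ n := h4.trans h3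
  rw [← NNReal.coe_le_coe] at h5
  push_cast at h5
  exact h5

end auxC

/-- Proposition 5.1 of the paper: under the spectral-radius condition
`ρ(Bπ) < 1/γ`, the matrix `A = Σ - γΣcr` is invertible, the discounted feature occupancy
`ν = (1-γ) ∑ₜ γᵗ (Bπ)ᵗ φ₀` converges, and the feature-dynamics coverage equals `νᵀ Σ⁻¹ ν`. -/
theorem stmt4 (d : ℕ) (hd : 0 < d) (γ : ℝ) (hγ0 : 0 ≤ γ) (hγ1 : γ < 1)
    (Sig Sigcr : Matrix (Fin d) (Fin d) ℝ) (hSig : Sig.PosDef) (φ₀ : Fin d → ℝ)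
    (A Bpi : Matrix (Fin d) (Fin d) ℝ)
    (hA : A = Sig - γ • Sigcr) (hB : Bpi = (Sig⁻¹ * Sigcr)ᵀ)
    (hspec : ∀ z ∈ spectrum ℂ (Bpi.map (Complex.ofReal : ℝ → ℂ)), γ * ‖z‖ < 1) :
    IsUnit A.det ∧ Summable (fun t : ℕ => γ ^ t • (Bpi ^ t *ᵥ φ₀)) ∧
      (let ν : Fin d → ℝ := (1 - γ) • ∑' t : ℕ, γ ^ t • (Bpi ^ t *ᵥ φ₀)
       (1 - γ) ^ 2 * (φ₀ ⬝ᵥ (A⁻¹ *ᵥ (Sig *ᵥ ((A⁻¹)ᵀ *ᵥ φ₀)))) = ν ⬝ᵥ (Sig⁻¹ *ᵥ ν)) := by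
  haveI : NeZero d := ⟨hd.ne'⟩
  haveI : Nonempty (Fin d) := Fin.pos_iff_nonempty.mp hd
  set Mr : Matrix (Fin d) (Fin d) ℝ := γ • Bpi with hMr
  set F : Matrix (Fin d) (Fin d) ℝ →+* Matrix (Fin d) (Fin d) ℂ :=
    (Complex.ofRealHom).mapMatrix with hF
  set Mc : Matrix (Fin d) (Fin d) ℂ := F Mr with hMc
  -- spectrum condition for Mc
  have hMceq : Mc = (γ : ℂ) • (Bpi.map (Complex.ofReal : ℝ → ℂ)) := by
    ext i j
    simp [hMc, hF, hMr, Matrix.map_apply, RingHom.mapMatrix_apply, Complex.ofReal_mul]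
  have hs : ∀ z ∈ spectrum ℂ Mc, ‖z‖ < 1 := by
    intro z hz
    rcases eq_or_ne γ 0 with h0 | h0
    · have : Mc = 0 := by rw [hMceq, h0]; simp
      rw [this, spectrum.zero_eq] at hz
      simp only [Set.mem_singleton_iff] at hz
      simp [hz]
    · have hu : (γ : ℂ) ≠ 0 := by exact_mod_cast h0
      set u : ℂˣ := Units.mk0 (γ : ℂ) hu with hudef
      have : Mc = u • (Bpi.map (Complex.ofReal : ℝ → ℂ)) := by
        rw [hMceq, Units.smul_def, hudef]; rfl
      rw [this, spectrum.unit_smul_eq_smul] at hz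
      obtain ⟨μ, hμ, hμz⟩ := hz
      have habs := hspec μ hμ
      rw [← hμz]
      have habs2 : ‖(γ : ℂ) * μ‖ = γ * ‖μ‖ := by
        rw [norm_mul, Complex.norm_real, Real.norm_eq_abs, abs_of_nonneg hγ0]
      calc ‖u • μ‖ = γ * ‖μ‖ := by
            rw [Units.smul_def, hudef, Units.val_mk0, smul_eq_mul]; exact habs2
        _ < 1 := habs
  -- geometric entry bound for Mr
  obtain ⟨r, hr0, hr1, hbd⟩ := aux_entry_bound Mc hs
  have hpow : ∀ n : ℕ, Mc ^ n = (Mr ^ n).map (Complex.ofReal : ℝ → ℂ) := by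
    intro n
    rw [hMc, ← map_pow]
    rfl
  have hbdR : ∀ᶠ n in atTop, ∀ i j, |(Mr ^ n) i j| ≤ r ^ n := by
    filter_upwards [hbd] with n hn i j
    have := hn i j
    rwa [hpow, Matrix.map_apply, Complex.norm_real, Real.norm_eq_abs] at this
  -- summability of v t = Mr^t *ᵥ φ₀
  set v : ℕ → Fin d → ℝ := fun t => (Mr ^ t) *ᵥ φ₀ with hv
  have hvsum : Summable v := by
    rw [Pi.summable]
    intro i
    refine Summable.of_norm_bounded_eventually_nat (g := fun n => (∑ j, |φ₀ j|) * r ^ n)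
      (Summable.mul_left _ (summable_geometric_of_lt_one hr0 hr1)) ?_
    filter_upwards [hbdR] with n hn
    rw [Real.norm_eq_abs, hv]
    calc |((Mr ^ n) *ᵥ φ₀) i| = |∑ j, (Mr ^ n) i j * φ₀ j| := by
          simp [Matrix.mulVec, dotProduct]
      _ ≤ ∑ j, |(Mr ^ n) i j * φ₀ j| := Finset.abs_sum_le_sum_abs _ _
      _ ≤ ∑ j, r ^ n * |φ₀ j| := by
          refine Finset.sum_le_sum fun j _ => ?_
          rw [abs_mul]
          exact mul_le_mul_of_nonneg_right (hn i j) (abs_nonneg _)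
      _ = (∑ j, |φ₀ j|) * r ^ n := by rw [← Finset.mul_sum]; ring
  have hfun : (fun t : ℕ => γ ^ t • (Bpi ^ t *ᵥ φ₀)) = v := by
    funext t
    show γ ^ t • (Bpi ^ t *ᵥ φ₀) = (γ • Bpi) ^ t *ᵥ φ₀
    rw [smul_pow, Matrix.smul_mulVec]
  -- invertibility
  have hSigdet : IsUnit Sig.det := isUnit_iff_ne_zero.mpr (ne_of_gt hSig.det_pos)
  set Nmat : Matrix (Fin d) (Fin d) ℝ := 1 - Mr with hN
  have hNdet : IsUnit Nmat.det := by
    rw [isUnit_iff_ne_zero]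
    intro hdet0
    have hc : (F Nmat).det = 0 := by
      rw [← RingHom.map_det, hdet0]
      simp
    have hcu : ¬ IsUnit (1 - Mc) := by
      rw [Matrix.isUnit_iff_isUnit_det, isUnit_iff_ne_zero, not_not]
      have heq : (1 : Matrix (Fin d) (Fin d) ℂ) - Mc = F Nmat := by
        rw [hN, map_sub, F.map_one]
      rw [heq]
      exact hc
    have h1spec : (1 : ℂ) ∈ spectrum ℂ Mc := by
      rw [spectrum.mem_iff]
      simpa using hcu
    have := hs 1 h1spec
    simp at this
  have hAN : A = Sig * Nmatᵀ := by
    rw [hA, hN, hMr, transpose_sub, transpose_one, transpose_smul, hB,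
      transpose_transpose, Matrix.mul_sub, Matrix.mul_one, Matrix.mul_smul,
      ← Matrix.mul_assoc, Matrix.mul_nonsing_inv Sig hSigdet, Matrix.one_mul]
  have hAdet : IsUnit A.det := by
    rw [hAN, Matrix.det_mul, Matrix.det_transpose]
    exact hSigdet.mul hNdet
  refine ⟨hAdet, by rw [hfun]; exact hvsum, ?_⟩
  intro ν
  -- w := tsum v satisfies Nmat *ᵥ w = φ₀
  set w : Fin d → ℝ := ∑' t, v t with hw
  have hterm : Tendsto v atTop (𝓝 0) := hvsum.tendsto_atTop_zero
  have hps : Tendsto (fun n : ℕ => ∑ t ∈ Finset.range n, v t) atTop (𝓝 w) :=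
    hvsum.hasSum.tendsto_sum_nat
  have hcont : Continuous (fun x : Fin d → ℝ => Nmat *ᵥ x) :=
    continuous_const.matrix_mulVec continuous_id
  have h2 : Tendsto (fun n : ℕ => Nmat *ᵥ ∑ t ∈ Finset.range n, v t) atTop
      (𝓝 (Nmat *ᵥ w)) := (hcont.tendsto w).comp hps
  have h3 : ∀ n : ℕ, Nmat *ᵥ ∑ t ∈ Finset.range n, v t = φ₀ - v n := by
    intro n
    have hsum : Nmat *ᵥ ∑ t ∈ Finset.range n, v t = ∑ t ∈ Finset.range n, Nmat *ᵥ v t := by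
      simp only [← Matrix.mulVecLin_apply]
      exact map_sum Nmat.mulVecLin v (Finset.range n)
    rw [hsum]
    have hterm' : ∀ t : ℕ, Nmat *ᵥ v t = v t - v (t + 1) := by
      intro t
      rw [hv, hN]
      rw [Matrix.mulVec_mulVec, sub_mul, one_mul, ← pow_succ', ← Matrix.sub_mulVec]
    simp_rw [hterm']
    rw [Finset.sum_range_sub' (fun t => v t) n, hv]
    simp
  simp_rw [h3] at h2
  have h4 : Tendsto (fun n : ℕ => φ₀ - v n) atTop (𝓝 (φ₀ - 0)) :=
    tendsto_const_nhds.sub hterm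
  have h1 : Nmat *ᵥ w = φ₀ := by
    have := tendsto_nhds_unique h2 h4
    rwa [sub_zero] at this
  have hwinv : w = Nmat⁻¹ *ᵥ φ₀ := by
    calc w = (Nmat⁻¹ * Nmat) *ᵥ w := by
          rw [Matrix.nonsing_inv_mul Nmat hNdet, Matrix.one_mulVec]
      _ = Nmat⁻¹ *ᵥ (Nmat *ᵥ w) := by rw [Matrix.mulVec_mulVec]
      _ = Nmat⁻¹ *ᵥ φ₀ := by rw [h1]
  -- matrix algebra for A⁻¹
  have hSigT : Sigᵀ = Sig := by
    have := hSig.isHermitian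
    rwa [Matrix.IsHermitian, Matrix.conjTranspose_eq_transpose_of_trivial] at this
  have hSiginvT : (Sig⁻¹)ᵀ = Sig⁻¹ := by
    rw [Matrix.transpose_nonsing_inv, hSigT]
  have hAinv : A⁻¹ = (Nmat⁻¹)ᵀ * Sig⁻¹ := by
    rw [hAN, Matrix.mul_inv_rev, ← Matrix.transpose_nonsing_inv]
  have hAinvT : (A⁻¹)ᵀ = Sig⁻¹ * Nmat⁻¹ := by
    rw [hAinv, Matrix.transpose_mul, transpose_transpose, hSiginvT]
  have hν : ν = (1 - γ) • w := by
    show (1 - γ) • ∑' t : ℕ, γ ^ t • (Bpi ^ t *ᵥ φ₀) = (1 - γ) • w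
    rw [hw, hfun]
  -- final computation
  have ha : (A⁻¹)ᵀ *ᵥ φ₀ = Sig⁻¹ *ᵥ w := by
    rw [hAinvT, ← Matrix.mulVec_mulVec, ← hwinv]
  have hb : Sig *ᵥ (Sig⁻¹ *ᵥ w) = w := by
    rw [Matrix.mulVec_mulVec, Matrix.mul_nonsing_inv Sig hSigdet, Matrix.one_mulVec]
  have hc2 : A⁻¹ *ᵥ w = (Nmat⁻¹)ᵀ *ᵥ (Sig⁻¹ *ᵥ w) := by
    rw [hAinv, ← Matrix.mulVec_mulVec]
  have e3 : φ₀ ⬝ᵥ ((Nmat⁻¹)ᵀ *ᵥ (Sig⁻¹ *ᵥ w)) = w ⬝ᵥ (Sig⁻¹ *ᵥ w) := by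
    rw [Matrix.dotProduct_mulVec, Matrix.vecMul_transpose, ← hwinv]
  rw [hν, ha, hb, hc2, e3, Matrix.mulVec_smul, smul_dotProduct,
    dotProduct_smul, smul_eq_mul, smul_eq_mul]
  ring

end
end

section
/- Fix a positive integer d and γ ∈ [0,1). Let Σ and Σcr be d×d real matrices with Σ symmetric positive definite, let φ₀ ∈ ℝ^d, set A := Σ − γ·Σcr and Bπ := (Σ⁻¹·Σcr)ᵀ, and assume A is invertible. Suppose v ∈ ℝ^d satisfies the fixed-point equation v = (1−γ)·φ₀ + γ·Bπ·v. Then the feature-dynamics coverage satisfies (1−γ)²·φ₀ᵀ·A⁻¹·Σ·A⁻ᵀ·φ₀ = vᵀ·Σ⁻¹·v. -/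
open Matrix MeasureTheory ProbabilityTheory
open scoped Classical

noncomputable section

/-- algebraic core of Proposition 5.4 of the paper: if `v` solves the
Bellman-flow fixed-point equation `v = (1-γ)φ₀ + γ Bπ v`, then the feature-dynamics
coverage equals `vᵀ Σ⁻¹ v`. -/
theorem stmt11 (d : ℕ) (hd : 0 < d) (γ : ℝ) (hγ0 : 0 ≤ γ) (hγ1 : γ < 1)
    (Sig Sigcr : Matrix (Fin d) (Fin d) ℝ) (hSig : Sig.PosDef) (φ₀ : Fin d → ℝ)
    (A Bpi : Matrix (Fin d) (Fin d) ℝ)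
    (hA : A = Sig - γ • Sigcr) (hB : Bpi = (Sig⁻¹ * Sigcr)ᵀ)
    (hAinv : IsUnit A.det)
    (v : Fin d → ℝ) (hv : v = (1 - γ) • φ₀ + γ • (Bpi *ᵥ v)) :
    (1 - γ) ^ 2 * (φ₀ ⬝ᵥ (A⁻¹ *ᵥ (Sig *ᵥ ((A⁻¹)ᵀ *ᵥ φ₀)))) = v ⬝ᵥ (Sig⁻¹ *ᵥ v) := by
  have hSd : IsUnit Sig.det := isUnit_iff_ne_zero.mpr hSig.det_pos.ne'
  have hSymm : Sigᵀ = Sig := hSig.isHermitian.eq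
  have hAd : IsUnit Aᵀ.det := by rwa [Matrix.det_transpose]
  -- Bpi rewritten
  have hBpi : Bpi = Sigcrᵀ * Sig⁻¹ := by
    rw [hB, Matrix.transpose_mul, Matrix.transpose_nonsing_inv, hSymm]
  have hAT : Aᵀ * Sig⁻¹ = 1 - γ • Bpi := by
    rw [hA, hBpi, Matrix.transpose_sub, Matrix.transpose_smul, hSymm, Matrix.sub_mul,
      Matrix.mul_nonsing_inv _ hSd, Matrix.smul_mul]
  have hkey : Aᵀ *ᵥ (Sig⁻¹ *ᵥ v) = (1 - γ) • φ₀ := by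
    rw [Matrix.mulVec_mulVec, hAT, Matrix.sub_mulVec, Matrix.one_mulVec,
      Matrix.smul_mulVec]
    nth_rewrite 1 [hv]
    module
  set w : Fin d → ℝ := (A⁻¹)ᵀ *ᵥ φ₀ with hw
  have hSv : Sig⁻¹ *ᵥ v = (1 - γ) • w := by
    have h2 : (Aᵀ)⁻¹ *ᵥ (Aᵀ *ᵥ (Sig⁻¹ *ᵥ v)) = Sig⁻¹ *ᵥ v := by
      rw [Matrix.mulVec_mulVec, Matrix.nonsing_inv_mul _ hAd, Matrix.one_mulVec]
    rw [← h2, hkey, Matrix.mulVec_smul, hw, Matrix.transpose_nonsing_inv]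
  have hvw : v = (1 - γ) • (Sig *ᵥ w) := by
    have := congrArg (fun x => Sig *ᵥ x) hSv
    simpa [Matrix.mulVec_mulVec, Matrix.mul_nonsing_inv _ hSd, Matrix.mulVec_smul] using this
  have hdp : φ₀ ⬝ᵥ (A⁻¹ *ᵥ (Sig *ᵥ w)) = w ⬝ᵥ (Sig *ᵥ w) := by
    rw [hw, Matrix.mulVec_transpose, Matrix.dotProduct_mulVec]
  rw [hdp, hSv, hvw, dotProduct_comm]
  simp [smul_dotProduct, dotProduct_smul]
  ring


end
end
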